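/- For every finite non-empty multiset S of natural numbers there exists an optimal base for the sum-of-digits cost function all of whose elements are prime numbers. That is, for every base B there is a base B' consisting only of primes with sum_digits(S, B') ≤ sum_digits(S, B). -/

import Mathlib

/-- The weight of digit position `i` in mixed radix base `B`: product of the first `i` radices. -/
def weight (B : List ℕ) (i : ℕ) : ℕ := (B.take i).prod

/-- The `i`-th digit of `v` in mixed radix base `B` (the most significant digit, at
position `B.length`, is `v / B.prod` and is unbounded). -/
def digit (B : List ℕ) (v i : ℕ) : ℕ :=
  if i < B.length then (v / weight B i) % B.getD i 1 else v / B.prod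

/-- The sum of the digits of `v` in base `B`. -/
def digitSum (B : List ℕ) (v : ℕ) : ℕ :=
  ∑ i ∈ Finset.range (B.length + 1), digit B v i

/-- The sum of digits of all elements of the multiset `S` in base `B`. -/
def sumDigits (S : Multiset ℕ) (B : List ℕ) : ℕ :=
  (S.map (digitSum B)).sum

lemma digitSum_nil (v : ℕ) : digitSum [] v = v := by
  simp [digitSum, digit]

lemma digitSum_cons (r : ℕ) (B : List ℕ) (v : ℕ) :
    digitSum (r :: B) v = v % r + digitSum B (v / r) := by
  unfold digitSum
  rw [List.length_cons, Finset.sum_range_succ' (fun i => digit (r :: B) v i)]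
  have h0 : digit (r :: B) v 0 = v % r := by
    simp [digit, weight]
  have h1 : ∀ i, digit (r :: B) v (i + 1) = digit B (v / r) i := by
    intro i
    unfold digit weight
    by_cases h : i < B.length
    · simp only [List.length_cons, Nat.add_lt_add_iff_right, h, if_pos,
        Nat.lt_succ_of_lt h, List.take_succ_cons, List.prod_cons, List.getD_cons_succ]
      rw [Nat.div_div_eq_div_mul, Nat.mul_comm]
    · simp only [List.length_cons, Nat.add_lt_add_iff_right, h, if_neg, if_false,
        List.prod_cons]
      rw [Nat.div_div_eq_div_mul, Nat.mul_comm]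
  simp only [h1, h0]
  ring

lemma mod_add_div_mod_le (a b v : ℕ) (ha : 1 ≤ a) :
    v % a + v / a % b ≤ v % (a * b) := by
  have key : v % (a * b) = v % a + a * (v / a % b) := by
    have h1 : v % (a * b) % a = v % a := Nat.mod_mod_of_dvd v ⟨b, rfl⟩
    have h2 : v % (a * b) / a = v / a % b := by
      rw [Nat.mod_mul_right_div_self]
    calc v % (a * b) = a * (v % (a * b) / a) + v % (a * b) % a :=
          (Nat.div_add_mod _ _).symm
      _ = v % a + a * (v / a % b) := by rw [h1, h2]; ring
  rw [key]
  have := Nat.le_mul_of_pos_left (v / a % b) ha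
  omega

lemma digitSum_append_mono (L : List ℕ) {B1 B2 : List ℕ}
    (h : ∀ w, digitSum B1 w ≤ digitSum B2 w) :
    ∀ v, digitSum (L ++ B1) v ≤ digitSum (L ++ B2) v := by
  induction L with
  | nil => simpa using h
  | cons x L ih =>
      intro v
      simp only [List.cons_append, digitSum_cons]
      exact Nat.add_le_add_left (ih _) _

lemma key_induction : ∀ n (B : List ℕ), (B.map (· - 1)).sum ≤ n →
    (∀ x ∈ B, 2 ≤ x) →
    ∃ B' : List ℕ, (∀ p ∈ B', Nat.Prime p) ∧ ∀ v, digitSum B' v ≤ digitSum B v := by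
  intro n
  induction n with
  | zero =>
      intro B hsum hB
      -- all map values are 0, so B must be empty (since each x ≥ 2 gives x - 1 ≥ 1)
      have : B = [] := by
        cases B with
        | nil => rfl
        | cons x B =>
            exfalso
            have := hB x List.mem_cons_self
            simp at hsum
            omega
      exact ⟨[], by simp, by simp [this]⟩
  | succ n ih =>
      intro B hsum hB
      by_cases hall : ∀ x ∈ B, Nat.Prime x
      · exact ⟨B, hall, fun v => le_refl _⟩
      · push_neg at hall
        obtain ⟨r, hrB, hrnp⟩ := hall
        obtain ⟨L, R, rfl⟩ := List.append_of_mem hrB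
        have hr2 : 2 ≤ r := hB r hrB
        obtain ⟨a, hadvd, ha2, halt⟩ := Nat.exists_dvd_of_not_prime2 hr2 hrnp
        obtain ⟨b, rfl⟩ := hadvd
        have hb2 : 2 ≤ b := by
          rcases Nat.lt_or_ge b 2 with hb | hb
          · interval_cases b <;> omega
          · exact hb
        -- new base
        set B2 : List ℕ := L ++ a :: b :: R with hB2
        have hmem : ∀ x ∈ B2, 2 ≤ x := by
          intro x hx
          simp only [hB2, List.mem_append, List.mem_cons] at hx
          rcases hx with h | h | h | h
          · exact hB x (by simp [List.mem_append, h])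
          · omega
          · omega
          · exact hB x (by simp [List.mem_append, List.mem_cons, h])
        have hab : a + b ≤ a * b := by nlinarith
        have hmeas : (B2.map (· - 1)).sum ≤ n := by
          have h1 : ((L ++ a * b :: R).map (· - 1)).sum
              = (L.map (· - 1)).sum + (a * b - 1) + (R.map (· - 1)).sum := by
            simp [List.map_append]; ring
          have h2 : (B2.map (· - 1)).sum
              = (L.map (· - 1)).sum + ((a - 1) + (b - 1)) + (R.map (· - 1)).sum := by
            simp [hB2, List.map_append]; ring
          have hab2 : 2 ≤ a * b := by nlinarith
          omega
        obtain ⟨B', hB'p, hB'le⟩ := ih B2 hmeas hmem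
        refine ⟨B', hB'p, fun v => le_trans (hB'le v) ?_⟩
        apply digitSum_append_mono
        intro w
        rw [digitSum_cons, digitSum_cons, digitSum_cons, Nat.div_div_eq_div_mul]
        have := mod_add_div_mod_le a b w (by omega)
        omega

theorem stmt7 (S : Multiset ℕ) (hS : S ≠ 0) (B : List ℕ) (hB : ∀ x ∈ B, 2 ≤ x) :
    ∃ B' : List ℕ, (∀ p ∈ B', Nat.Prime p) ∧ sumDigits S B' ≤ sumDigits S B := by
  obtain ⟨B', hp, hle⟩ := key_induction ((B.map (· - 1)).sum) B (le_refl _) hB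
  refine ⟨B', hp, ?_⟩
  unfold sumDigits
  exact Multiset.sum_map_le_sum_map _ _ fun v _ => hle v
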